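/- Let Y, Z, W, and H̃ be finite-dimensional real inner product spaces, R : Y → Z a surjective linear map, G : W → Y an injective linear map with range(G) = ker(R), G̃ : H̃ → Y an injective linear map, and J : W → H̃ a linear map with G̃ ∘ J = G. Let a : Y × Y → ℝ be a bilinear form with a(θ,θ) ≥ 0 for all θ ∈ Y and a(G w, G w) ≥ α‖w‖_W² for all w ∈ W, for some α > 0. Then for every linear functional F : H̃ → ℝ there exists a unique quadruple (z̃, θ, r, w̃) ∈ H̃ × Y × Z × H̃ satisfying: (i) ⟨G̃ z̃, G̃ v⟩_Y = F(v) for all v ∈ H̃; (ii) a(θ, ψ) + ⟨R ψ, r⟩_Z = ⟨G̃ z̃, ψ⟩_Y for all ψ ∈ Y, and ⟨R θ, s⟩_Z = 0 for all s ∈ Z; (iii) ⟨G̃ w̃, G̃ v⟩_Y = ⟨θ, G̃ v⟩_Y for all v ∈ H̃. Moreover G̃ w̃ = θ and w̃ = J w_X, where w_X is the unique element of W satisfying a(G w_X, G v) = F(J v) for all v ∈ W. -/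

import Mathlib

open scoped RealInnerProductSpace

section Aux

lemma aux_surj {V₁ V₂ : Type*} [AddCommGroup V₁] [Module ℝ V₁] [FiniteDimensional ℝ V₁]
    [AddCommGroup V₂] [Module ℝ V₂] [FiniteDimensional ℝ V₂]
    (Φ : V₁ →ₗ[ℝ] V₂) (h : Function.Injective Φ)
    (hd : Module.finrank ℝ V₂ = Module.finrank ℝ V₁) : Function.Surjective Φ := by
  rw [← LinearMap.range_eq_top]
  apply Submodule.eq_top_of_finrank_eq
  rw [LinearMap.finrank_range_of_inj h, hd]

/-- A bilinear-form version of Riesz representation: if `b : V →ₗ Dual V` is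
injective (e.g. coming from a coercive bilinear form), every functional is
represented. -/
lemma aux_repr {V : Type*} [AddCommGroup V] [Module ℝ V] [FiniteDimensional ℝ V]
    (Φ : V →ₗ[ℝ] Module.Dual ℝ V) (h : Function.Injective Φ) (f : Module.Dual ℝ V) :
    ∃ z : V, ∀ v : V, Φ z v = f v := by
  obtain ⟨z, hz⟩ := aux_surj Φ h Subspace.dual_finrank_eq f
  exact ⟨z, fun v => by rw [hz]⟩

/-- Riesz representation for the pulled-back inner product `⟪T·, T·⟫`. -/
lemma aux_riesz_pullback {H Y : Type*}
    [NormedAddCommGroup H] [InnerProductSpace ℝ H] [FiniteDimensional ℝ H]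
    [NormedAddCommGroup Y] [InnerProductSpace ℝ Y] [FiniteDimensional ℝ Y]
    (T : H →ₗ[ℝ] Y) (hT : Function.Injective T) (f : H →ₗ[ℝ] ℝ) :
    ∃ z : H, ∀ v : H, ⟪T z, T v⟫ = f v := by
  let Φ : H →ₗ[ℝ] Module.Dual ℝ H :=
    LinearMap.mk₂ ℝ (fun z v => ⟪T z, T v⟫)
      (by intro m₁ m₂ n; simp [inner_add_left])
      (by intro c m n; simp [real_inner_smul_left])
      (by intro m n₁ n₂; simp [inner_add_right])
      (by intro c m n; simp [real_inner_smul_right])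
  have hΦ : Function.Injective Φ := by
    rw [injective_iff_map_eq_zero]
    intro z hz
    have : ⟪T z, T z⟫ = 0 := by
      have := congrFun (congrArg DFunLike.coe hz) z
      simpa [Φ] using this
    have : T z = 0 := by rwa [inner_self_eq_zero] at this
    exact hT (by simpa using this)
  obtain ⟨z, hz⟩ := aux_repr Φ hΦ f
  exact ⟨z, fun v => hz v⟩

/-- Uniqueness for the pulled-back inner product problem. -/
lemma aux_riesz_unique {H Y : Type*}
    [NormedAddCommGroup H] [InnerProductSpace ℝ H]
    [NormedAddCommGroup Y] [InnerProductSpace ℝ Y]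
    (T : H →ₗ[ℝ] Y) (hT : Function.Injective T) {z₁ z₂ : H}
    (h : ∀ v : H, ⟪T z₁, T v⟫ = ⟪T z₂, T v⟫) : z₁ = z₂ := by
  have h0 : ⟪T z₁ - T z₂, T (z₁ - z₂)⟫ = 0 := by
    rw [inner_sub_left, h (z₁ - z₂)]; ring
  rw [show T z₁ - T z₂ = T (z₁ - z₂) by rw [map_sub], inner_self_eq_zero] at h0
  exact sub_eq_zero.mp (hT (by simpa using h0))

end Aux

/-- Abstract form of Lemma 3.1 (correctness of the three-step algorithm when
`Γ_cs` is connected): the pre-processing solve (i), the Stokes-like system (ii),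
and the post-processing projection (iii) have a unique solution, the recovered
`w̃` satisfies `G̃ w̃ = θ`, and `w̃ = J w_X` where `w_X` is the unique
`H²`-conforming Galerkin solution. -/
theorem stmt_4
    {Y Z W Ht : Type*}
    [NormedAddCommGroup Y] [InnerProductSpace ℝ Y] [FiniteDimensional ℝ Y]
    [NormedAddCommGroup Z] [InnerProductSpace ℝ Z] [FiniteDimensional ℝ Z]
    [NormedAddCommGroup W] [InnerProductSpace ℝ W] [FiniteDimensional ℝ W]
    [NormedAddCommGroup Ht] [InnerProductSpace ℝ Ht] [FiniteDimensional ℝ Ht]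
    (R : Y →ₗ[ℝ] Z) (hR : Function.Surjective R)
    (G : W →ₗ[ℝ] Y) (hG : Function.Injective G)
    (hexact : LinearMap.range G = LinearMap.ker R)
    (Gt : Ht →ₗ[ℝ] Y) (hGt : Function.Injective Gt)
    (J : W →ₗ[ℝ] Ht) (hJ : Gt.comp J = G)
    (a : Y →ₗ[ℝ] Y →ₗ[ℝ] ℝ) (α : ℝ) (hα : 0 < α)
    (ha_pos : ∀ θ : Y, 0 ≤ a θ θ)
    (ha_coer : ∀ w : W, α * ‖w‖ ^ 2 ≤ a (G w) (G w))
    (F : Ht →ₗ[ℝ] ℝ) :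
    (∃! q : Ht × Y × Z × Ht,
        (∀ v : Ht, ⟪Gt q.1, Gt v⟫ = F v) ∧
        (∀ ψ : Y, a q.2.1 ψ + ⟪R ψ, q.2.2.1⟫ = ⟪Gt q.1, ψ⟫) ∧
        (∀ s : Z, ⟪R q.2.1, s⟫ = 0) ∧
        (∀ v : Ht, ⟪Gt q.2.2.2, Gt v⟫ = ⟪q.2.1, Gt v⟫)) ∧
    (∃! wX : W, ∀ v : W, a (G wX) (G v) = F (J v)) ∧
    (∀ (zt : Ht) (θ : Y) (r : Z) (wt : Ht),
      (∀ v : Ht, ⟪Gt zt, Gt v⟫ = F v) →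
      (∀ ψ : Y, a θ ψ + ⟪R ψ, r⟫ = ⟪Gt zt, ψ⟫) →
      (∀ s : Z, ⟪R θ, s⟫ = 0) →
      (∀ v : Ht, ⟪Gt wt, Gt v⟫ = ⟪θ, Gt v⟫) →
      Gt wt = θ ∧
        ∀ wX : W, (∀ v : W, a (G wX) (G v) = F (J v)) → wt = J wX) := by
  have hGJ : ∀ w : W, Gt (J w) = G w := fun w => congrFun (congrArg DFunLike.coe hJ) w
  -- coercive-form uniqueness on W
  have hWuniq : ∀ {w₁ w₂ : W}, (∀ v : W, a (G w₁) (G v) = a (G w₂) (G v)) → w₁ = w₂ := by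
    intro w₁ w₂ h
    have h0 : a (G (w₁ - w₂)) (G (w₁ - w₂)) = 0 := by
      have h1 := h (w₁ - w₂)
      simp only [map_sub, LinearMap.sub_apply] at h1 ⊢
      linarith
    have hn : ‖w₁ - w₂‖ ^ 2 ≤ 0 := by
      have := ha_coer (w₁ - w₂)
      rw [h0] at this
      nlinarith
    have h2 : ‖w₁ - w₂‖ ^ 2 = 0 := le_antisymm hn (sq_nonneg _)
    have h3 : w₁ - w₂ = 0 := by simpa [pow_eq_zero_iff] using h2
    exact sub_eq_zero.mp h3
  -- existence and uniqueness of the Galerkin solution wX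
  have hwX : ∃! wX : W, ∀ v : W, a (G wX) (G v) = F (J v) := by
    let Φ : W →ₗ[ℝ] Module.Dual ℝ W :=
      LinearMap.mk₂ ℝ (fun w v => a (G w) (G v))
        (by intro m₁ m₂ n; simp) (by intro c m n; simp)
        (by intro m n₁ n₂; simp) (by intro c m n; simp)
    have hΦ : Function.Injective Φ := by
      rw [injective_iff_map_eq_zero]
      intro w hw
      have h0 : a (G w) (G w) = 0 := by
        have := congrFun (congrArg DFunLike.coe hw) w
        simpa [Φ] using this
      have hn : ‖w‖ ^ 2 ≤ 0 := by
        have := ha_coer w; rw [h0] at this; nlinarith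
      have : ‖w‖ ^ 2 = 0 := le_antisymm hn (sq_nonneg _)
      simpa [pow_eq_zero_iff] using this
    obtain ⟨wX, hwX⟩ := aux_repr Φ hΦ (F.comp J)
    have hwXs : ∀ v : W, a (G wX) (G v) = F (J v) := fun v => by simpa [Φ] using hwX v
    exact ⟨wX, hwXs, fun w h => hWuniq (fun v => by rw [h v, hwXs v])⟩
  obtain ⟨wX, hwXs, hwXu⟩ := hwX
  -- existence of zt
  obtain ⟨zt, hzt⟩ := aux_riesz_pullback Gt hGt F
  -- θ := G wX, and existence of r
  set θ : Y := G wX with hθdef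
  -- the functional ψ ↦ ⟪Gt zt, ψ⟫ - a θ ψ vanishes on ker R
  have hker : ∀ ψ : Y, R ψ = 0 → ⟪Gt zt, ψ⟫ - a θ ψ = 0 := by
    intro ψ hψ
    have : ψ ∈ LinearMap.range G := hexact ▸ LinearMap.mem_ker.mpr hψ
    obtain ⟨v, rfl⟩ := this
    have e1 : ⟪Gt zt, G v⟫ = F (J v) := by rw [← hGJ v]; exact hzt (J v)
    rw [e1, hwXs v, sub_self]
  -- right inverse of R
  obtain ⟨S, hS⟩ := R.exists_rightInverse_of_surjective (LinearMap.range_eq_top.2 hR)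
  have hSap : ∀ s : Z, R (S s) = s := fun s => congrFun (congrArg DFunLike.coe hS) s
  -- existence of r : represent the functional s ↦ ⟪Gt zt, S s⟫ - a θ (S s) in Z
  obtain ⟨r, hr⟩ := aux_riesz_pullback (LinearMap.id : Z →ₗ[ℝ] Z) (fun _ _ h => h)
    (((innerₗ Y) (Gt zt) - (a θ)).comp S)
  have hrψ : ∀ ψ : Y, ⟪R ψ, r⟫ = ⟪Gt zt, ψ⟫ - a θ ψ := by
    intro ψ
    have h1 : ⟪r, R ψ⟫ = ⟪Gt zt, S (R ψ)⟫ - a θ (S (R ψ)) := by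
      have := hr (R ψ); exact this
    have h2 : R (S (R ψ) - ψ) = 0 := by rw [map_sub, hSap]; simp
    have h3 := hker _ h2
    simp only [map_sub, inner_sub_right, LinearMap.sub_apply] at h3
    have h4 : (⟪R ψ, r⟫ : ℝ) = ⟪r, R ψ⟫ := real_inner_comm _ _
    linarith
  -- existence of wt
  obtain ⟨wt0, hwt0⟩ := aux_riesz_pullback Gt hGt (((innerₗ Y) θ).comp Gt)
  have hwt0' : ∀ v : Ht, ⟪Gt wt0, Gt v⟫ = ⟪θ, Gt v⟫ := by
    intro v; have := hwt0 v; exact this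
  -- the candidate quadruple
  have hq1 : ∀ v : Ht, ⟪Gt zt, Gt v⟫ = F v := hzt
  have hq2 : ∀ ψ : Y, a θ ψ + ⟪R ψ, r⟫ = ⟪Gt zt, ψ⟫ := by
    intro ψ; rw [hrψ ψ]; ring
  have hq3 : ∀ s : Z, ⟪R θ, s⟫ = 0 := by
    intro s
    have : R θ = 0 := by
      rw [hθdef, ← LinearMap.mem_ker, ← hexact]
      exact ⟨wX, rfl⟩
    rw [this, inner_zero_left]
  -- the key recovery lemma (third conjunct), proved first
  have hmain : ∀ (zt' : Ht) (θ' : Y) (r' : Z) (wt' : Ht),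
      (∀ v : Ht, ⟪Gt zt', Gt v⟫ = F v) →
      (∀ ψ : Y, a θ' ψ + ⟪R ψ, r'⟫ = ⟪Gt zt', ψ⟫) →
      (∀ s : Z, ⟪R θ', s⟫ = 0) →
      (∀ v : Ht, ⟪Gt wt', Gt v⟫ = ⟪θ', Gt v⟫) →
      Gt wt' = θ' ∧
        ∀ wX' : W, (∀ v : W, a (G wX') (G v) = F (J v)) → wt' = J wX' := by
    intro zt' θ' r' wt' h1 h2 h3 h4
    -- R θ' = 0
    have hRθ : R θ' = 0 := by
      have := h3 (R θ'); rwa [inner_self_eq_zero] at this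
    obtain ⟨w', hw'⟩ : θ' ∈ LinearMap.range G := hexact ▸ LinearMap.mem_ker.mpr hRθ
    -- w' is a Galerkin solution
    have hw'gal : ∀ v : W, a (G w') (G v) = F (J v) := by
      intro v
      have hRGv : R (G v) = 0 := LinearMap.mem_ker.mp (hexact ▸ ⟨v, rfl⟩)
      have h5 := h2 (G v)
      rw [hRGv, inner_zero_left, add_zero, ← hw'] at h5
      rw [h5, ← hGJ v, h1 (J v)]
    -- hence w' = wX for any Galerkin solution wX'
    have hθ'wt : Gt wt' = θ' := by
      have : wt' = J w' := aux_riesz_unique Gt hGt (fun v => by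
        rw [h4 v, hGJ w', hw'])
      rw [this, hGJ, hw']
    refine ⟨hθ'wt, fun wX' hgal => ?_⟩
    have hww : w' = wX' := hWuniq (fun v => by rw [hw'gal v, hgal v])
    have : wt' = J w' := aux_riesz_unique Gt hGt (fun v => by
      rw [h4 v, hGJ w', hw'])
    rw [this, hww]
  refine ⟨⟨(zt, θ, r, wt0), ⟨hq1, hq2, hq3, hwt0'⟩, ?_⟩, ⟨wX, hwXs, hwXu⟩, hmain⟩
  -- uniqueness of the quadruple
  rintro ⟨zt', θ', r', wt'⟩ ⟨h1, h2, h3, h4⟩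
  have hz : zt' = zt := aux_riesz_unique Gt hGt (fun v => by rw [h1 v, hzt v])
  subst hz
  obtain ⟨hθeq, hwteq⟩ := hmain zt' θ' r' wt' h1 h2 h3 h4
  -- θ' = θ
  have hθ' : θ' = θ := by
    have h5 := hwteq wX hwXs
    rw [← hθeq, h5, hGJ, hθdef]
  -- r' = r
  have hr' : r' = r := by
    have : ∀ ψ : Y, ⟪R ψ, r' - r⟫ = 0 := by
      intro ψ
      have e1 := h2 ψ
      have e2 := hq2 ψ
      rw [hθ'] at e1
      rw [inner_sub_right]
      linarith
    obtain ⟨ψ, hψ⟩ := hR (r' - r)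
    have := this ψ
    rw [hψ, inner_self_eq_zero, sub_eq_zero] at this
    exact this
  -- wt' = wt0
  have hwt' : wt' = wt0 := by
    rw [hwteq wX hwXs]
    exact (aux_riesz_unique Gt hGt (fun v => by
      rw [hwt0' v, hθdef, ← hGJ])).symm
  simp [hθ', hr', hwt']
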